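/- Let τ > 0, λ, ω be real numbers with λ·τ > 0, set Ω = 1 + ω²·τ²/(2·(2 + λτ)) and A = √((2 + λτ)/(λτ)), and let B > 0 be a real number with B⁴ − 2·Ω·B² + 1 = 0 (i.e., B² = Ω ± √(Ω² − 1)). Define x : ℤ → ℝ by x(n) = A·B if n is even and x(n) = A/B if n is odd. Then x solves the discrete van der Pol equation: for all n ∈ ℤ, (x(n+2) − 2·x(n+1) + x(n))/τ² − λ·(1 − x(n)²)·(x(n+1) − x(n))/τ + ω²·x(n) = 0. -/

import Mathlib

/-- The alternating function `x(n) = A·B` (`n` even), `x(n) = A/B` (`n` odd), with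
`A = √((2+λτ)/(λτ))` and `B⁴ − 2ΩB² + 1 = 0`, solves the discrete van der Pol
equation `(x(n+2) − 2x(n+1) + x(n))/τ² − λ(1 − x(n)²)(x(n+1) − x(n))/τ + ω²x(n) = 0`. -/
theorem vanderPol_discrete_solution (τ lam ω : ℝ) (hτ : 0 < τ) (hlt : 0 < lam * τ)
    (Ω A B : ℝ) (hΩ : Ω = 1 + ω ^ 2 * τ ^ 2 / (2 * (2 + lam * τ)))
    (hA : A = Real.sqrt ((2 + lam * τ) / (lam * τ)))
    (hB : 0 < B) (hBeq : B ^ 4 - 2 * Ω * B ^ 2 + 1 = 0)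
    (x : ℤ → ℝ) (hx : ∀ n : ℤ, x n = if Even n then A * B else A / B) :
    ∀ n : ℤ,
      (x (n + 2) - 2 * x (n + 1) + x n) / τ ^ 2
        - lam * (1 - x n ^ 2) * (x (n + 1) - x n) / τ + ω ^ 2 * x n = 0 := by
  have hpos : (0:ℝ) < 2 + lam * τ := by linarith
  have hA2 : A ^ 2 = (2 + lam * τ) / (lam * τ) := by
    rw [hA]; exact Real.sq_sqrt (by positivity)
  have hA2' : A ^ 2 * (lam * τ) = 2 + lam * τ := by
    rw [hA2]; exact div_mul_cancel₀ _ (ne_of_gt hlt)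
  have hB' : B ≠ 0 := ne_of_gt hB
  have hτ' : τ ≠ 0 := ne_of_gt hτ
  have hBeq' : B ^ 4 - 2 * B ^ 2 + 1 = ω ^ 2 * τ ^ 2 * B ^ 2 / (2 + lam * τ) := by
    rw [hΩ, mul_comm (2:ℝ) (2 + lam * τ), ← div_div] at hBeq
    linear_combination hBeq
  intro n
  rcases Int.even_or_odd n with he | ho
  · have h1 : ¬ Even (n + 1) := by simp [Int.even_add_one, he]
    have h2 : Even (n + 2) := by
      rcases he with ⟨k, hk⟩; exact ⟨k + 1, by omega⟩
    rw [hx n, hx (n+1), hx (n+2), if_pos he, if_neg h1, if_pos h2]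
    have key : (B ^ 4 - 2 * B ^ 2 + 1) * (2 + lam * τ) = ω ^ 2 * τ ^ 2 * B ^ 2 := by
      rw [hBeq']; exact div_mul_cancel₀ _ hpos.ne'
    field_simp
    linear_combination A * (B ^ 2 * (1 - B ^ 2) * hA2' - key)
  · have h1 : Even (n + 1) := by
      rcases ho with ⟨k, hk⟩; exact ⟨k + 1, by omega⟩
    have h0 : ¬ Even n := Int.not_even_iff_odd.mpr ho
    have h2 : ¬ Even (n + 2) := by
      rcases ho with ⟨k, hk⟩
      intro ⟨m, hm⟩; omega
    rw [hx n, hx (n+1), hx (n+2), if_neg h0, if_pos h1, if_neg h2]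
    have key : (B ^ 4 - 2 * B ^ 2 + 1) * (2 + lam * τ) = ω ^ 2 * τ ^ 2 * B ^ 2 := by
      rw [hBeq']; exact div_mul_cancel₀ _ hpos.ne'
    field_simp
    linear_combination A * ((B ^ 2 - 1) * hA2' - key)
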